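/- Assume the insertion setup, assume K is a simple lattice, assume (L, ≤; γ; H, ν) is a quasi-colored lattice (L carrying the order induced from M), and assume that for every x ∈ L with x < a one has cg_L(x,a) = ∇_L and for every y ∈ L with b < y one has cg_L(b,y) = ∇_L. Define γ' : Pairs(M) → H by: γ'(x,y) = γ(x,y) if x, y ∈ L; γ'(x,x) = γ(a,a) if x ∈ K \ L; γ'(x,y) = γ(a,b) if x, y ∈ K, x ≠ y, and not both x, y ∈ L; γ'(x,y) = γ(a,y) if x ∈ K \ L and y ∈ L \ K; and γ'(x,y) = γ(x,b) if x ∈ L \ K and y ∈ K \ L. Then (M, ≤; γ'; H, ν) is a quasi-colored lattice. -/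
import Mathlib


/-- A congruence of a lattice: an equivalence relation compatible with `⊔` and `⊓`. -/
structure LatCon (L : Type*) [Lattice L] where
  rel : L → L → Prop
  refl : ∀ x, rel x x
  symm : ∀ {x y}, rel x y → rel y x
  trans : ∀ {x y z}, rel x y → rel y z → rel x z
  sup : ∀ {x₁ y₁ x₂ y₂}, rel x₁ y₁ → rel x₂ y₂ → rel (x₁ ⊔ x₂) (y₁ ⊔ y₂)
  inf : ∀ {x₁ y₁ x₂ y₂}, rel x₁ y₁ → rel x₂ y₂ → rel (x₁ ⊓ x₂) (y₁ ⊓ y₂)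

/-- The principal congruence `cg(a,b)`: the smallest congruence collapsing `a` and `b`. -/
def latCg {L : Type*} [Lattice L] (a b : L) : L → L → Prop :=
  fun x y => ∀ θ : LatCon L, θ.rel a b → θ.rel x y

/-- A lattice is simple if it has at least two elements and its only congruences
are the equality congruence `Δ` and the full congruence `∇`. -/
def IsSimpleLat (L : Type*) [Lattice L] : Prop :=
  Nontrivial L ∧ ∀ θ : LatCon L, (∀ x y, θ.rel x y ↔ x = y) ∨ (∀ x y, θ.rel x y)

/-- `γ` is a quasi-coloring of the lattice `L` with colors in the quasiordered set
`(H, ν)`: it is surjective onto `H` and satisfies (C1) and (C2). -/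
def IsQuasiColoring {L : Type*} [Lattice L] {H : Type*} (ν : H → H → Prop)
    (γ : {p : L × L // p.1 ≤ p.2} → H) : Prop :=
  Function.Surjective γ ∧
  ∀ p q : {p : L × L // p.1 ≤ p.2},
    (ν (γ p) (γ q) → latCg p.1.1 p.1.2 ≤ latCg q.1.1 q.1.2) ∧
    (latCg p.1.1 p.1.2 ≤ latCg q.1.1 q.1.2 → ν (γ p) (γ q))

/- ### Auxiliary lemmas -/

theorem latCg_le_iff {α : Type*} [Lattice α] {u₁ v₁ u₂ v₂ : α} :
    latCg u₁ v₁ ≤ latCg u₂ v₂ ↔ latCg u₂ v₂ u₁ v₁ := by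
  simp only [Pi.le_def, le_Prop_eq]
  constructor
  · intro h
    exact h u₁ v₁ (fun θ hθ => hθ)
  · intro h x y hxy θ hθ
    exact hxy θ (h θ hθ)

open Classical in
/-- Projection of `M` to `↥L`, sending elements outside `L` to a default `c ∈ L`. -/
noncomputable def latProj {M : Type*} [Lattice M] (L : Sublattice M) {c : M} (hc : c ∈ L)
    (x : M) : ↥L :=
  if h : x ∈ L then ⟨x, h⟩ else ⟨c, hc⟩

theorem latProj_pos {M : Type*} [Lattice M] (L : Sublattice M) {c : M} (hc : c ∈ L)
    {x : M} (h : x ∈ L) : latProj L hc x = ⟨x, h⟩ := dif_pos h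

theorem latProj_neg {M : Type*} [Lattice M] (L : Sublattice M) {c : M} (hc : c ∈ L)
    {x : M} (h : x ∉ L) : latProj L hc x = ⟨c, hc⟩ := dif_neg h

theorem latProj_coe {M : Type*} [Lattice M] (L : Sublattice M) {c : M} (hc : c ∈ L)
    (u : ↥L) : latProj L hc (u : M) = u := dif_pos u.2

/-- The extension of a congruence `θ` of `L` to `M`. -/
def ERel {M : Type*} [Lattice M] {a b : M} (L : Sublattice M) (haL : a ∈ L) (hbL : b ∈ L)
    (θ : LatCon ↥L) (x y : M) : Prop :=
  θ.rel (latProj L haL x) (latProj L haL y) ∧ θ.rel (latProj L hbL x) (latProj L hbL y) ∧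
    (x ∉ L → y ∉ L → x ≠ y → θ.rel ⟨a, haL⟩ ⟨b, hbL⟩)

theorem quasiColoring_of_insertion {M : Type*} [Lattice M] (a b : M) (L : Sublattice M)
    {H : Type*} (ν : H → H → Prop) (hr : Reflexive ν) (ht : Transitive ν)
    (hab : a < b) (haL : a ∈ L) (hbL : b ∈ L)
    (hUnion : ∀ x : M, x ∈ L ∨ x ∈ Set.Icc a b)
    (hInter : (L : Set M) ∩ Set.Icc a b = {a, b})
    (hcov : ∀ l ∈ L, ¬(a < l ∧ l < b))
    (horder : ∀ k ∈ Set.Icc a b, ∀ l ∈ (L : Set M) \ Set.Icc a b,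
      (k ≤ l ↔ b ≤ l ∨ (k = a ∧ a ≤ l)) ∧ (l ≤ k ↔ l ≤ a ∨ (k = b ∧ l ≤ b)))
    (hKsimple : IsSimpleLat ↥(Set.Icc a b))
    (γ : {p : (↥L) × (↥L) // p.1 ≤ p.2} → H)
    (hγ : IsQuasiColoring ν γ)
    (hcga : ∀ x : ↥L, x < ⟨a, haL⟩ → ∀ u v : ↥L, latCg x ⟨a, haL⟩ u v)
    (hcgb : ∀ y : ↥L, (⟨b, hbL⟩ : ↥L) < y → ∀ u v : ↥L, latCg (⟨b, hbL⟩ : ↥L) y u v)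
    (γ' : {p : M × M // p.1 ≤ p.2} → H)
    -- `γ'(x,y) = γ(x,y)` if `x, y ∈ L`:
    (hγ'L : ∀ (x y : M) (hx : x ∈ L) (hy : y ∈ L) (hxy : x ≤ y)
      (hxy' : (⟨x, hx⟩ : ↥L) ≤ ⟨y, hy⟩),
      γ' ⟨(x, y), hxy⟩ = γ ⟨(⟨x, hx⟩, ⟨y, hy⟩), hxy'⟩)
    -- `γ'(x,x) = γ(a,a)` if `x ∈ K \ L`:
    (hγ'diag : ∀ x : M, x ∈ Set.Icc a b → x ∉ L → ∀ (hxx : x ≤ x)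
      (haa : (⟨a, haL⟩ : ↥L) ≤ ⟨a, haL⟩),
      γ' ⟨(x, x), hxx⟩ = γ ⟨(⟨a, haL⟩, ⟨a, haL⟩), haa⟩)
    -- `γ'(x,y) = γ(a,b)` if `x, y ∈ K`, `x ≠ y`, and not both `x, y ∈ L`:
    (hγ'K : ∀ (x y : M) (hxy : x ≤ y), x ∈ Set.Icc a b → y ∈ Set.Icc a b → x ≠ y →
      ¬(x ∈ L ∧ y ∈ L) → ∀ (hab' : (⟨a, haL⟩ : ↥L) ≤ ⟨b, hbL⟩),
      γ' ⟨(x, y), hxy⟩ = γ ⟨(⟨a, haL⟩, ⟨b, hbL⟩), hab'⟩)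
    -- `γ'(x,y) = γ(a,y)` if `x ∈ K \ L` and `y ∈ L \ K`:
    (hγ'up : ∀ (x y : M) (hxy : x ≤ y), x ∈ Set.Icc a b → x ∉ L →
      ∀ (hy : y ∈ L), y ∉ Set.Icc a b → ∀ (hay : (⟨a, haL⟩ : ↥L) ≤ ⟨y, hy⟩),
      γ' ⟨(x, y), hxy⟩ = γ ⟨(⟨a, haL⟩, ⟨y, hy⟩), hay⟩)
    -- `γ'(x,y) = γ(x,b)` if `x ∈ L \ K` and `y ∈ K \ L`:
    (hγ'dn : ∀ (x y : M) (hxy : x ≤ y) (hx : x ∈ L), x ∉ Set.Icc a b →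
      y ∈ Set.Icc a b → y ∉ L → ∀ (hxb : (⟨x, hx⟩ : ↥L) ≤ ⟨b, hbL⟩),
      γ' ⟨(x, y), hxy⟩ = γ ⟨(⟨x, hx⟩, ⟨b, hbL⟩), hxb⟩) :
    IsQuasiColoring ν γ' := by
  classical
  -- basic membership facts
  have hmemK : ∀ x : M, x ∉ L → a < x ∧ x < b := by
    intro x hx
    rcases hUnion x with h | h
    · exact absurd h hx
    · exact ⟨h.1.lt_of_ne (by rintro rfl; exact hx haL),
        h.2.lt_of_ne' (by rintro rfl; exact hx hbL)⟩
  have hLK : ∀ x : M, x ∈ L → x ∈ Set.Icc a b → x = a ∨ x = b := by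
    intro x h1 h2
    have hx : x ∈ ((L : Set M) ∩ Set.Icc a b) := ⟨h1, h2⟩
    rw [hInter] at hx
    simpa using hx
  -- order computations
  have hsup_le_a : ∀ x k : M, x ≤ a → k ∉ L → x ⊔ k = k := by
    intro x k hxa hk
    exact sup_eq_right.mpr (hxa.trans (hmemK k hk).1.le)
  have hinf_ge_b : ∀ x k : M, b ≤ x → k ∉ L → x ⊓ k = k := by
    intro x k hbx hk
    exact inf_eq_right.mpr ((hmemK k hk).2.le.trans hbx)
  have hsup_not_a : ∀ x k : M, x ∈ L → ¬x ≤ a → k ∉ L → x ⊔ k = x ⊔ b := by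
    intro x k hxL hxa hk
    obtain ⟨hak, hkb⟩ := hmemK k hk
    apply le_antisymm
    · exact sup_le le_sup_left (hkb.le.trans le_sup_right)
    · refine sup_le le_sup_left ?_
      by_cases hmL : x ⊔ k ∈ L
      · by_cases hmK : x ⊔ k ∈ Set.Icc a b
        · rcases hLK _ hmL hmK with h | h
          · exact absurd (h ▸ (le_sup_left : x ≤ x ⊔ k)) hxa
          · exact h ▸ le_rfl
        · rcases (horder k ⟨hak.le, hkb.le⟩ _ ⟨hmL, hmK⟩).1.mp le_sup_right with h | ⟨h, _⟩
          · exact h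
          · exact absurd (h ▸ haL) hk
      · exfalso
        have hmK : x ⊔ k ∈ Set.Icc a b := (hUnion _).resolve_left hmL
        by_cases hxK : x ∈ Set.Icc a b
        · rcases hLK x hxL hxK with h | h
          · exact hxa (le_of_eq h)
          · have hble : b ≤ x ⊔ k := by rw [← h]; exact le_sup_left
            have hxkb : x ⊔ k = b := le_antisymm hmK.2 hble
            exact hmL (by rw [hxkb]; exact hbL)
        · rcases (horder _ hmK x ⟨hxL, hxK⟩).2.mp le_sup_left with h | ⟨h, _⟩
          · exact hxa h
          · exact hmL (h ▸ hbL)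
  have hinf_not_b : ∀ x k : M, x ∈ L → ¬b ≤ x → k ∉ L → x ⊓ k = x ⊓ a := by
    intro x k hxL hbx hk
    obtain ⟨hak, hkb⟩ := hmemK k hk
    apply le_antisymm
    · refine le_inf inf_le_left ?_
      by_cases hmL : x ⊓ k ∈ L
      · by_cases hmK : x ⊓ k ∈ Set.Icc a b
        · rcases hLK _ hmL hmK with h | h
          · exact h ▸ le_rfl
          · exact absurd (h ▸ (inf_le_left : x ⊓ k ≤ x)) hbx
        · rcases (horder k ⟨hak.le, hkb.le⟩ _ ⟨hmL, hmK⟩).2.mp inf_le_right with h | ⟨h, _⟩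
          · exact h
          · exact absurd (h ▸ hbL) hk
      · exfalso
        have hmK : x ⊓ k ∈ Set.Icc a b := (hUnion _).resolve_left hmL
        by_cases hxK : x ∈ Set.Icc a b
        · rcases hLK x hxL hxK with h | h
          · have hale : x ⊓ k ≤ a := by rw [← h]; exact inf_le_left
            have hxka : x ⊓ k = a := le_antisymm hale hmK.1
            exact hmL (by rw [hxka]; exact haL)
          · exact hbx (le_of_eq h.symm)
        · rcases (horder _ hmK x ⟨hxL, hxK⟩).1.mp inf_le_left with h | ⟨h, _⟩
          · exact hbx h
          · exact hmL (h ▸ haL)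
    · exact le_inf inf_le_left ((inf_le_right : x ⊓ a ≤ a).trans hak.le)
  -- transfer of simplicity
  have hS : ∀ (Θ : LatCon M) (u v : M), u ∈ Set.Icc a b → v ∈ Set.Icc a b → u ≠ v →
      Θ.rel u v → Θ.rel a b := by
    intro Θ u v hu hv huv h
    let ΘK : LatCon ↥(Set.Icc a b) :=
      { rel := fun s t => Θ.rel s t
        refl := fun s => Θ.refl s
        symm := fun h => Θ.symm h
        trans := fun h1 h2 => Θ.trans h1 h2
        sup := fun h1 h2 => Θ.sup h1 h2
        inf := fun h1 h2 => Θ.inf h1 h2 }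
    rcases hKsimple.2 ΘK with hΔ | hful
    · exact absurd (Subtype.ext_iff.mp ((hΔ ⟨u, hu⟩ ⟨v, hv⟩).mp h)) huv
    · exact hful ⟨a, le_rfl, hab.le⟩ ⟨b, hab.le, le_rfl⟩
  have hKall : ∀ Θ : LatCon M, Θ.rel a b → ∀ u v : M,
      u ∈ Set.Icc a b → v ∈ Set.Icc a b → Θ.rel u v := by
    intro Θ h u v hu hv
    have h1 : Θ.rel u b := by
      have h2 := Θ.sup h (Θ.refl u)
      rwa [sup_eq_right.mpr hu.1, sup_eq_left.mpr hu.2] at h2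
    have h2 : Θ.rel v b := by
      have h3 := Θ.sup h (Θ.refl v)
      rwa [sup_eq_right.mpr hv.1, sup_eq_left.mpr hv.2] at h3
    exact Θ.trans h1 (Θ.symm h2)
  -- star lemmas: nontrivial collapses at a (from below b) or at b (from above a) give θ a b
  have hstar : ∀ (θ : LatCon ↥L) (w : ↥L), (⟨a, haL⟩ : ↥L) < w →
      θ.rel ⟨a, haL⟩ w → θ.rel ⟨a, haL⟩ ⟨b, hbL⟩ := by
    intro θ w hw h
    have h2 : θ.rel ⟨b, hbL⟩ (w ⊔ ⟨b, hbL⟩) := by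
      have h3 := θ.sup h (θ.refl ⟨b, hbL⟩)
      rwa [show (⟨a, haL⟩ : ↥L) ⊔ ⟨b, hbL⟩ = ⟨b, hbL⟩ from
        Subtype.ext (sup_eq_right.mpr hab.le)] at h3
    by_cases hlt : (⟨b, hbL⟩ : ↥L) < w ⊔ ⟨b, hbL⟩
    · exact hcgb _ hlt _ _ θ h2
    · have heq : (⟨b, hbL⟩ : ↥L) = w ⊔ ⟨b, hbL⟩ := eq_of_le_of_not_lt le_sup_right hlt
      have hwb : (w : M) ≤ b := by
        have := (le_sup_left : w ≤ w ⊔ ⟨b, hbL⟩)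
        rw [← heq] at this
        exact this
      rcases hLK w.1 w.2 ⟨hw.le, hwb⟩ with h1 | h1
      · exact absurd (Subtype.ext h1) hw.ne'
      · have : w = ⟨b, hbL⟩ := Subtype.ext h1
        rw [this] at h
        exact h
  have hstar' : ∀ (θ : LatCon ↥L) (w : ↥L), w < (⟨b, hbL⟩ : ↥L) →
      θ.rel w ⟨b, hbL⟩ → θ.rel ⟨a, haL⟩ ⟨b, hbL⟩ := by
    intro θ w hw h
    have h2 : θ.rel (w ⊓ ⟨a, haL⟩) ⟨a, haL⟩ := by
      have h3 := θ.inf h (θ.refl ⟨a, haL⟩)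
      rwa [show (⟨b, hbL⟩ : ↥L) ⊓ ⟨a, haL⟩ = ⟨a, haL⟩ from
        Subtype.ext (inf_eq_right.mpr hab.le)] at h3
    by_cases hlt : w ⊓ ⟨a, haL⟩ < (⟨a, haL⟩ : ↥L)
    · exact hcga _ hlt _ _ θ h2
    · have heq : w ⊓ ⟨a, haL⟩ = (⟨a, haL⟩ : ↥L) := eq_of_le_of_not_lt inf_le_right hlt
      have haw : a ≤ (w : M) := by
        have := (inf_le_left : w ⊓ ⟨a, haL⟩ ≤ w)
        rw [heq] at this
        exact this
      rcases hLK w.1 w.2 ⟨haw, hw.le⟩ with h1 | h1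
      · have : w = ⟨a, haL⟩ := Subtype.ext h1
        rw [this] at h
        exact h
      · exact absurd (Subtype.ext h1) hw.ne
  -- join/meet of projections
  have hul_sup : ∀ x y : M, latProj L hbL (x ⊔ y) = latProj L hbL x ⊔ latProj L hbL y := by
    have key : ∀ x y : M, x ∈ L → y ∉ L →
        latProj L hbL (x ⊔ y) = latProj L hbL x ⊔ latProj L hbL y := by
      intro x y hx hy
      by_cases hxa : x ≤ a
      · rw [hsup_le_a x y hxa hy, latProj_neg L hbL hy, latProj_pos L hbL hx]
        exact Subtype.ext (sup_eq_right.mpr (hxa.trans hab.le)).symm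
      · rw [hsup_not_a x y hx hxa hy, latProj_pos L hbL (L.supClosed hx hbL),
          latProj_pos L hbL hx, latProj_neg L hbL hy]
        exact Subtype.ext rfl
    intro x y
    by_cases hx : x ∈ L <;> by_cases hy : y ∈ L
    · rw [latProj_pos L hbL (L.supClosed hx hy), latProj_pos L hbL hx, latProj_pos L hbL hy]
      exact Subtype.ext rfl
    · exact key x y hx hy
    · rw [sup_comm x y, sup_comm (latProj L hbL x)]
      exact key y x hy hx
    · by_cases hxy : x ⊔ y ∈ L
      · rcases hLK _ hxy ⟨(hmemK x hx).1.le.trans le_sup_left,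
          sup_le (hmemK x hx).2.le (hmemK y hy).2.le⟩ with h | h
        · have hxa2 : x ≤ a := by rw [← h]; exact le_sup_left
          exact absurd hxa2 (hmemK x hx).1.not_ge
        · rw [latProj_pos L hbL hxy, latProj_neg L hbL hx, latProj_neg L hbL hy]
          exact Subtype.ext (show x ⊔ y = b ⊔ b by rw [h, sup_idem])
      · rw [latProj_neg L hbL hxy, latProj_neg L hbL hx, latProj_neg L hbL hy]
        exact Subtype.ext (sup_idem b).symm
  have hdl_inf : ∀ x y : M, latProj L haL (x ⊓ y) = latProj L haL x ⊓ latProj L haL y := by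
    have key : ∀ x y : M, x ∈ L → y ∉ L →
        latProj L haL (x ⊓ y) = latProj L haL x ⊓ latProj L haL y := by
      intro x y hx hy
      by_cases hbx : b ≤ x
      · rw [hinf_ge_b x y hbx hy, latProj_neg L haL hy, latProj_pos L haL hx]
        exact Subtype.ext (inf_eq_right.mpr (hab.le.trans hbx)).symm
      · rw [hinf_not_b x y hx hbx hy, latProj_pos L haL (L.infClosed hx haL),
          latProj_pos L haL hx, latProj_neg L haL hy]
        exact Subtype.ext rfl
    intro x y
    by_cases hx : x ∈ L <;> by_cases hy : y ∈ L
    · rw [latProj_pos L haL (L.infClosed hx hy), latProj_pos L haL hx, latProj_pos L haL hy]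
      exact Subtype.ext rfl
    · exact key x y hx hy
    · rw [inf_comm x y, inf_comm (latProj L haL x)]
      exact key y x hy hx
    · by_cases hxy : x ⊓ y ∈ L
      · rcases hLK _ hxy ⟨le_inf (hmemK x hx).1.le (hmemK y hy).1.le,
          inf_le_left.trans (hmemK x hx).2.le⟩ with h | h
        · rw [latProj_pos L haL hxy, latProj_neg L haL hx, latProj_neg L haL hy]
          exact Subtype.ext (show x ⊓ y = a ⊓ a by rw [h, inf_idem])
        · have hbx2 : b ≤ x := by rw [← h]; exact inf_le_left
          exact absurd hbx2 (hmemK x hx).2.not_ge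
      · rw [latProj_neg L haL hxy, latProj_neg L haL hx, latProj_neg L haL hy]
        exact Subtype.ext (inf_idem a).symm
  -- the extension of a congruence of L to a congruence of M
  have hE : ∀ θ : LatCon ↥L, ∃ Θ : LatCon M, Θ.rel = ERel L haL hbL θ := by
    intro θ
    have hG2 : θ.rel ⟨a, haL⟩ ⟨b, hbL⟩ → ∀ z : M,
        θ.rel (latProj L haL z) (latProj L hbL z) := by
      intro habθ z
      by_cases h : z ∈ L
      · rw [latProj_pos L haL h, latProj_pos L hbL h]
        exact θ.refl _
      · rw [latProj_neg L haL h, latProj_neg L hbL h]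
        exact habθ
    have Erefl : ∀ z : M, ERel L haL hbL θ z z :=
      fun z => ⟨θ.refl _, θ.refl _, fun _ _ hne => absurd rfl hne⟩
    have Esymm : ∀ {s t : M}, ERel L haL hbL θ s t → ERel L haL hbL θ t s :=
      fun h => ⟨θ.symm h.1, θ.symm h.2.1, fun h1 h2 h3 => h.2.2 h2 h1 h3.symm⟩
    have Etrans : ∀ {x y z : M}, ERel L haL hbL θ x y → ERel L haL hbL θ y z →
        ERel L haL hbL θ x z := by
      intro x y z h1 h2
      refine ⟨θ.trans h1.1 h2.1, θ.trans h1.2.1 h2.2.1, ?_⟩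
      intro hx hz hne
      by_cases hy : y ∈ L
      · have ha1 := h1.1
        have hb1 := h1.2.1
        rw [latProj_neg L haL hx, latProj_pos L haL hy] at ha1
        rw [latProj_neg L hbL hx, latProj_pos L hbL hy] at hb1
        exact θ.trans ha1 (θ.symm hb1)
      · by_cases hxy : x = y
        · exact h2.2.2 (hxy ▸ hx) hz (hxy ▸ hne)
        · exact h1.2.2 hx hy hxy
    have hclass : ∀ x y : M, ERel L haL hbL θ x y → ¬θ.rel ⟨a, haL⟩ ⟨b, hbL⟩ →
        (∃ hx : x ∈ L, ∃ hy : y ∈ L, θ.rel ⟨x, hx⟩ ⟨y, hy⟩) ∨ (x = y ∧ x ∉ L) := by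
      intro x y h hn
      obtain ⟨h1, h2, h3⟩ := h
      by_cases hx : x ∈ L <;> by_cases hy : y ∈ L
      · rw [latProj_pos L haL hx, latProj_pos L haL hy] at h1
        exact Or.inl ⟨hx, hy, h1⟩
      · exfalso
        rw [latProj_pos L haL hx, latProj_neg L haL hy] at h1
        rw [latProj_pos L hbL hx, latProj_neg L hbL hy] at h2
        exact hn (θ.trans (θ.symm h1) h2)
      · exfalso
        rw [latProj_neg L haL hx, latProj_pos L haL hy] at h1
        rw [latProj_neg L hbL hx, latProj_pos L hbL hy] at h2
        exact hn (θ.trans h1 (θ.symm h2))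
      · by_cases he : x = y
        · exact Or.inr ⟨he, hx⟩
        · exact absurd (h3 hx hy he) hn
    -- the two hard mixed cases
    have Hmix : ∀ (x y : M) (hx : x ∈ L) (hy : y ∈ L), θ.rel ⟨x, hx⟩ ⟨y, hy⟩ →
        x ≤ a → ¬y ≤ a → ∀ k, k ∉ L → ERel L haL hbL θ (x ⊔ k) (y ⊔ k) := by
      intro x y hx hy hrel hxa hya k hk
      have hw : θ.rel ⟨a, haL⟩ (⟨y, hy⟩ ⊔ ⟨a, haL⟩) := by
        have h3 := θ.sup hrel (θ.refl ⟨a, haL⟩)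
        rwa [show (⟨x, hx⟩ : ↥L) ⊔ ⟨a, haL⟩ = ⟨a, haL⟩ from
          Subtype.ext (sup_eq_right.mpr hxa)] at h3
      have hlt : (⟨a, haL⟩ : ↥L) < ⟨y, hy⟩ ⊔ ⟨a, haL⟩ := by
        refine lt_of_le_of_ne le_sup_right (fun e => hya ?_)
        have e' := congrArg Subtype.val e
        exact le_sup_left.trans e'.symm.le
      have habθ := hstar θ _ hlt hw
      have hyb : θ.rel ⟨b, hbL⟩ ⟨y ⊔ b, L.supClosed hy hbL⟩ := by
        have h3 := θ.sup hrel (θ.refl ⟨b, hbL⟩)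
        rwa [show (⟨x, hx⟩ : ↥L) ⊔ ⟨b, hbL⟩ = ⟨b, hbL⟩ from
          Subtype.ext (sup_eq_right.mpr (hxa.trans hab.le))] at h3
      rw [hsup_le_a x k hxa hk, hsup_not_a y k hy hya hk]
      refine ⟨?_, ?_, fun _ _ _ => habθ⟩
      · rw [latProj_neg L haL hk, latProj_pos L haL (L.supClosed hy hbL)]
        exact θ.trans habθ hyb
      · rw [latProj_neg L hbL hk, latProj_pos L hbL (L.supClosed hy hbL)]
        exact hyb
    have Hmix' : ∀ (x y : M) (hx : x ∈ L) (hy : y ∈ L), θ.rel ⟨x, hx⟩ ⟨y, hy⟩ →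
        b ≤ x → ¬b ≤ y → ∀ k, k ∉ L → ERel L haL hbL θ (x ⊓ k) (y ⊓ k) := by
      intro x y hx hy hrel hbx hby k hk
      have hw : θ.rel (⟨y, hy⟩ ⊓ ⟨b, hbL⟩) ⟨b, hbL⟩ := by
        have h3 := θ.inf hrel (θ.refl ⟨b, hbL⟩)
        rw [show (⟨x, hx⟩ : ↥L) ⊓ ⟨b, hbL⟩ = ⟨b, hbL⟩ from
          Subtype.ext (inf_eq_right.mpr hbx)] at h3
        exact θ.symm h3
      have hlt : (⟨y, hy⟩ : ↥L) ⊓ ⟨b, hbL⟩ < ⟨b, hbL⟩ := by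
        refine lt_of_le_of_ne inf_le_right (fun e => hby ?_)
        have e' := congrArg Subtype.val e
        exact e'.symm.le.trans inf_le_left
      have habθ := hstar' θ _ hlt hw
      have hya : θ.rel ⟨a, haL⟩ ⟨y ⊓ a, L.infClosed hy haL⟩ := by
        have h3 := θ.inf hrel (θ.refl ⟨a, haL⟩)
        rwa [show (⟨x, hx⟩ : ↥L) ⊓ ⟨a, haL⟩ = ⟨a, haL⟩ from
          Subtype.ext (inf_eq_right.mpr (hab.le.trans hbx))] at h3
      rw [hinf_ge_b x k hbx hk, hinf_not_b y k hy hby hk]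
      refine ⟨?_, ?_, fun _ _ _ => habθ⟩
      · rw [latProj_neg L haL hk, latProj_pos L haL (L.infClosed hy haL)]
        exact hya
      · rw [latProj_neg L hbL hk, latProj_pos L hbL (L.infClosed hy haL)]
        exact θ.trans (θ.symm habθ) hya
    have Hsup : ∀ (x y : M) (hx : x ∈ L) (hy : y ∈ L), θ.rel ⟨x, hx⟩ ⟨y, hy⟩ →
        ∀ k, k ∉ L → ERel L haL hbL θ (x ⊔ k) (y ⊔ k) := by
      intro x y hx hy hrel k hk
      by_cases hxa : x ≤ a <;> by_cases hya : y ≤ a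
      · rw [hsup_le_a x k hxa hk, hsup_le_a y k hya hk]
        exact Erefl k
      · exact Hmix x y hx hy hrel hxa hya k hk
      · exact Esymm (Hmix y x hy hx (θ.symm hrel) hya hxa k hk)
      · rw [hsup_not_a x k hx hxa hk, hsup_not_a y k hy hya hk]
        refine ⟨?_, ?_, fun h' _ _ => absurd (L.supClosed hx hbL) h'⟩
        · rw [latProj_pos L haL (L.supClosed hx hbL), latProj_pos L haL (L.supClosed hy hbL)]
          exact θ.sup hrel (θ.refl ⟨b, hbL⟩)
        · rw [latProj_pos L hbL (L.supClosed hx hbL), latProj_pos L hbL (L.supClosed hy hbL)]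
          exact θ.sup hrel (θ.refl ⟨b, hbL⟩)
    have Hinf : ∀ (x y : M) (hx : x ∈ L) (hy : y ∈ L), θ.rel ⟨x, hx⟩ ⟨y, hy⟩ →
        ∀ k, k ∉ L → ERel L haL hbL θ (x ⊓ k) (y ⊓ k) := by
      intro x y hx hy hrel k hk
      by_cases hbx : b ≤ x <;> by_cases hby : b ≤ y
      · rw [hinf_ge_b x k hbx hk, hinf_ge_b y k hby hk]
        exact Erefl k
      · exact Hmix' x y hx hy hrel hbx hby k hk
      · exact Esymm (Hmix' y x hy hx (θ.symm hrel) hby hbx k hk)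
      · rw [hinf_not_b x k hx hbx hk, hinf_not_b y k hy hby hk]
        refine ⟨?_, ?_, fun h' _ _ => absurd (L.infClosed hx haL) h'⟩
        · rw [latProj_pos L haL (L.infClosed hx haL), latProj_pos L haL (L.infClosed hy haL)]
          exact θ.inf hrel (θ.refl ⟨a, haL⟩)
        · rw [latProj_pos L hbL (L.infClosed hx haL), latProj_pos L hbL (L.infClosed hy haL)]
          exact θ.inf hrel (θ.refl ⟨a, haL⟩)
    have Esup : ∀ {x₁ y₁ x₂ y₂ : M}, ERel L haL hbL θ x₁ y₁ → ERel L haL hbL θ x₂ y₂ →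
        ERel L haL hbL θ (x₁ ⊔ x₂) (y₁ ⊔ y₂) := by
      intro x₁ y₁ x₂ y₂ h₁ h₂
      have hu : θ.rel (latProj L hbL (x₁ ⊔ x₂)) (latProj L hbL (y₁ ⊔ y₂)) := by
        rw [hul_sup, hul_sup]
        exact θ.sup h₁.2.1 h₂.2.1
      by_cases habθ : θ.rel ⟨a, haL⟩ ⟨b, hbL⟩
      · exact ⟨θ.trans (hG2 habθ _) (θ.trans hu (θ.symm (hG2 habθ _))), hu, fun _ _ _ => habθ⟩
      · rcases hclass _ _ h₁ habθ with ⟨hx1, hy1, hr1⟩ | ⟨he1, hk1⟩ <;>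
          rcases hclass _ _ h₂ habθ with ⟨hx2, hy2, hr2⟩ | ⟨he2, hk2⟩
        · refine ⟨?_, hu, fun h' _ _ => absurd (L.supClosed hx1 hx2) h'⟩
          rw [latProj_pos L haL (L.supClosed hx1 hx2), latProj_pos L haL (L.supClosed hy1 hy2)]
          exact θ.sup hr1 hr2
        · subst he2
          exact Hsup x₁ y₁ hx1 hy1 hr1 x₂ hk2
        · subst he1
          rw [sup_comm x₁ x₂, sup_comm x₁ y₂]
          exact Hsup x₂ y₂ hx2 hy2 hr2 x₁ hk1
        · subst he1; subst he2
          exact Erefl _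
    have Einf : ∀ {x₁ y₁ x₂ y₂ : M}, ERel L haL hbL θ x₁ y₁ → ERel L haL hbL θ x₂ y₂ →
        ERel L haL hbL θ (x₁ ⊓ x₂) (y₁ ⊓ y₂) := by
      intro x₁ y₁ x₂ y₂ h₁ h₂
      have hd : θ.rel (latProj L haL (x₁ ⊓ x₂)) (latProj L haL (y₁ ⊓ y₂)) := by
        rw [hdl_inf, hdl_inf]
        exact θ.inf h₁.1 h₂.1
      by_cases habθ : θ.rel ⟨a, haL⟩ ⟨b, hbL⟩
      · exact ⟨hd, θ.trans (θ.symm (hG2 habθ _)) (θ.trans hd (hG2 habθ _)), fun _ _ _ => habθ⟩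
      · rcases hclass _ _ h₁ habθ with ⟨hx1, hy1, hr1⟩ | ⟨he1, hk1⟩ <;>
          rcases hclass _ _ h₂ habθ with ⟨hx2, hy2, hr2⟩ | ⟨he2, hk2⟩
        · refine ⟨hd, ?_, fun h' _ _ => absurd (L.infClosed hx1 hx2) h'⟩
          rw [latProj_pos L hbL (L.infClosed hx1 hx2), latProj_pos L hbL (L.infClosed hy1 hy2)]
          exact θ.inf hr1 hr2
        · subst he2
          exact Hinf x₁ y₁ hx1 hy1 hr1 x₂ hk2
        · subst he1
          rw [inf_comm x₁ x₂, inf_comm x₁ y₂]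
          exact Hinf x₂ y₂ hx2 hy2 hr2 x₁ hk1
        · subst he1; subst he2
          exact Erefl _
    exact ⟨⟨ERel L haL hbL θ, Erefl, Esymm, Etrans, Esup, Einf⟩, rfl⟩
  -- restriction of congruences of M to L
  have hRes : ∀ Θ : LatCon M, ∃ θ : LatCon ↥L, ∀ u v : ↥L, θ.rel u v ↔ Θ.rel ↑u ↑v :=
    fun Θ => ⟨⟨fun u v => Θ.rel ↑u ↑v, fun u => Θ.refl ↑u, fun h => Θ.symm h,
      fun h1 h2 => Θ.trans h1 h2, fun h1 h2 => Θ.sup h1 h2, fun h1 h2 => Θ.inf h1 h2⟩,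
      fun _ _ => Iff.rfl⟩
  -- the extension restricted to L is the original congruence
  have hback : ∀ (θ : LatCon ↥L) (u v : ↥L), θ.rel u v → ERel L haL hbL θ ↑u ↑v := by
    intro θ u v h
    refine ⟨?_, ?_, fun hu _ _ => absurd u.2 hu⟩
    · rw [latProj_coe, latProj_coe]
      exact h
    · rw [latProj_coe, latProj_coe]
      exact h
  have hfwd : ∀ (θ : LatCon ↥L) (u v : ↥L), ERel L haL hbL θ ↑u ↑v → θ.rel u v := by
    intro θ u v h
    have h1 := h.1
    rwa [latProj_coe, latProj_coe] at h1
  -- every pair of M has a "color representative" pair in L with the same congruence behaviour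
  have hhat : ∀ p : {p : M × M // p.1 ≤ p.2}, ∃ q : {q : (↥L) × (↥L) // q.1 ≤ q.2},
      γ' p = γ q ∧ ∀ Θ : LatCon M, (Θ.rel p.1.1 p.1.2 ↔ Θ.rel ↑q.1.1 ↑q.1.2) := by
    have hcommon : ∀ (x y : M) (hxy : x ≤ y), x ∈ Set.Icc a b → y ∈ Set.Icc a b → x ≠ y →
        ¬(x ∈ L ∧ y ∈ L) →
        γ' ⟨(x, y), hxy⟩ = γ ⟨(⟨a, haL⟩, ⟨b, hbL⟩), hab.le⟩ ∧
        ∀ Θ : LatCon M, (Θ.rel x y ↔ Θ.rel a b) := by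
      intro x y hxy hxK hyK hne hnb
      exact ⟨hγ'K x y hxy hxK hyK hne hnb hab.le,
        fun Θ => ⟨fun h => hS Θ x y hxK hyK hne h, fun h => hKall Θ h x y hxK hyK⟩⟩
    rintro ⟨⟨x, y⟩, hxy⟩
    by_cases hx : x ∈ L <;> by_cases hy : y ∈ L
    · exact ⟨⟨(⟨x, hx⟩, ⟨y, hy⟩), hxy⟩, hγ'L x y hx hy hxy hxy, fun Θ => Iff.rfl⟩
    · -- x ∈ L, y ∉ L
      have hyK : y ∈ Set.Icc a b := (hUnion y).resolve_left hy
      by_cases hxK : x ∈ Set.Icc a b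
      · obtain ⟨e, hiff⟩ := hcommon x y hxy hxK hyK (fun e => hy (e ▸ hx)) (fun h => hy h.2)
        exact ⟨⟨(⟨a, haL⟩, ⟨b, hbL⟩), hab.le⟩, e, hiff⟩
      · -- down case: x ∈ L \ K, y ∈ K \ L, so x ≤ a
        have hxa : x ≤ a := by
          rcases (horder y hyK x ⟨hx, hxK⟩).2.mp hxy with h | ⟨e, _⟩
          · exact h
          · exact absurd (show y ∈ L by rw [e]; exact hbL) hy
        refine ⟨⟨(⟨x, hx⟩, ⟨b, hbL⟩), show x ≤ b from hxa.trans hab.le⟩,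
          hγ'dn x y hxy hx hxK hyK hy _, fun Θ => ⟨?_, ?_⟩⟩
        · intro h
          have hay : Θ.rel a y := by
            have h3 := Θ.sup h (Θ.refl a)
            rwa [sup_eq_right.mpr hxa, sup_eq_left.mpr hyK.1] at h3
          have habΘ := hS Θ a y ⟨le_rfl, hab.le⟩ hyK (fun e => hy (e ▸ haL)) hay
          have hxa' : Θ.rel x a := by
            have h3 := Θ.inf h (Θ.refl a)
            rwa [inf_eq_left.mpr hxa, inf_eq_right.mpr hyK.1] at h3
          exact Θ.trans hxa' habΘ
        · intro h
          have h3 := Θ.inf h (Θ.refl y)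
          rwa [inf_eq_left.mpr hxy, inf_eq_right.mpr hyK.2] at h3
    · -- x ∉ L, y ∈ L
      have hxK : x ∈ Set.Icc a b := (hUnion x).resolve_left hx
      by_cases hyK : y ∈ Set.Icc a b
      · obtain ⟨e, hiff⟩ := hcommon x y hxy hxK hyK
          (fun e => hx (show x ∈ L by rw [e]; exact hy)) (fun h => hx h.1)
        exact ⟨⟨(⟨a, haL⟩, ⟨b, hbL⟩), hab.le⟩, e, hiff⟩
      · -- up case: x ∈ K \ L, y ∈ L \ K, so b ≤ y
        have hby : b ≤ y := by
          rcases (horder x hxK y ⟨hy, hyK⟩).1.mp hxy with h | ⟨e, _⟩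
          · exact h
          · exact absurd (show x ∈ L by rw [e]; exact haL) hx
        refine ⟨⟨(⟨a, haL⟩, ⟨y, hy⟩), show a ≤ y from hab.le.trans hby⟩,
          hγ'up x y hxy hxK hx hy hyK _, fun Θ => ⟨?_, ?_⟩⟩
        · intro h
          have hxb : Θ.rel x b := by
            have h3 := Θ.inf h (Θ.refl b)
            rwa [inf_eq_left.mpr hxK.2, inf_eq_right.mpr hby] at h3
          have habΘ := hS Θ x b hxK ⟨hab.le, le_rfl⟩
            (fun e => hx (show x ∈ L by rw [e]; exact hbL)) hxb
          have hby' : Θ.rel b y := by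
            have h3 := Θ.sup h (Θ.refl b)
            rwa [sup_eq_right.mpr hxK.2, sup_eq_left.mpr hby] at h3
          exact Θ.trans habΘ hby'
        · intro h
          have h3 := Θ.sup h (Θ.refl x)
          rwa [sup_eq_right.mpr hxK.1, sup_eq_left.mpr hxy] at h3
    · -- x ∉ L, y ∉ L
      have hxK : x ∈ Set.Icc a b := (hUnion x).resolve_left hx
      have hyK : y ∈ Set.Icc a b := (hUnion y).resolve_left hy
      by_cases he : x = y
      · subst he
        exact ⟨⟨(⟨a, haL⟩, ⟨a, haL⟩), le_rfl⟩, hγ'diag x hxK hx hxy le_rfl,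
          fun Θ => iff_of_true (Θ.refl x) (Θ.refl a)⟩
      · obtain ⟨e, hiff⟩ := hcommon x y hxy hxK hyK he (fun h => hx h.1)
        exact ⟨⟨(⟨a, haL⟩, ⟨b, hbL⟩), hab.le⟩, e, hiff⟩
  -- the main transfer of principal congruence containment
  have hmain : ∀ (p q : {p : M × M // p.1 ≤ p.2}) (p' q' : {p : (↥L) × (↥L) // p.1 ≤ p.2}),
      (∀ Θ : LatCon M, Θ.rel p.1.1 p.1.2 ↔ Θ.rel ↑p'.1.1 ↑p'.1.2) →
      (∀ Θ : LatCon M, Θ.rel q.1.1 q.1.2 ↔ Θ.rel ↑q'.1.1 ↑q'.1.2) →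
      (latCg q.1.1 q.1.2 p.1.1 p.1.2 ↔ latCg q'.1.1 q'.1.2 p'.1.1 p'.1.2) := by
    intro p q p' q' hp hq
    constructor
    · intro h θ hθ
      obtain ⟨Θ, hΘ⟩ := hE θ
      have hLiff : ∀ u v : ↥L, Θ.rel ↑u ↑v ↔ θ.rel u v := by
        intro u v
        rw [hΘ]
        exact ⟨hfwd θ u v, hback θ u v⟩
      have hqΘ : Θ.rel q.1.1 q.1.2 := (hq Θ).mpr ((hLiff _ _).mpr hθ)
      exact (hLiff _ _).mp ((hp Θ).mp (h Θ hqΘ))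
    · intro h Θ hΘrel
      obtain ⟨θ, hθiff⟩ := hRes Θ
      have hθq : θ.rel q'.1.1 q'.1.2 := (hθiff _ _).mpr ((hq Θ).mp hΘrel)
      exact (hp Θ).mpr ((hθiff _ _).mp (h θ hθq))
  -- assemble
  constructor
  · intro h
    obtain ⟨⟨⟨u, v⟩, huv⟩, rfl⟩ := hγ.1 h
    exact ⟨⟨((u : M), (v : M)), huv⟩, hγ'L u v u.2 v.2 huv huv⟩
  · intro p q
    obtain ⟨p', hp1, hp2⟩ := hhat p
    obtain ⟨q', hq1, hq2⟩ := hhat q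
    have h2 := hγ.2 p' q'
    constructor
    · intro hν
      rw [hp1, hq1] at hν
      exact latCg_le_iff.mpr ((hmain p q p' q' hp2 hq2).mpr (latCg_le_iff.mp (h2.1 hν)))
    · intro hle
      rw [hp1, hq1]
      exact h2.2 (latCg_le_iff.mpr ((hmain p q p' q' hp2 hq2).mp (latCg_le_iff.mp hle)))
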